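/- Let Λ be a lattice of full rank in ℝ^d of covolume 1. Then ψ̲_1(Λ) = −ω(Λ)/(1 + ω(Λ)), with the convention that the right-hand side equals −1 when ω(Λ) = +∞ and equals 0 when ω(Λ) = 0 (equivalently, ω(Λ)^{−1} + ψ̲_1(Λ)^{−1} + 1 = 0 when 0 < ω(Λ) < ∞). -/

import Mathlib

open scoped BigOperators

noncomputable section

/-- The multiplicative function `Π(x) = ∏ i |x_i|^{1/d}`. -/
def Pibar (d : ℕ) (x : Fin d → ℝ) : ℝ := ∏ i, |x i| ^ (1 / (d : ℝ))

/-- The Diophantine exponent of a lattice `Λ ⊆ ℝ^d` (sup-norm `‖·‖`). -/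
def dioExp (d : ℕ) (Λ : Set (Fin d → ℝ)) : EReal :=
  sSup {g : EReal | ∃ γ : ℝ, g = (γ : EReal) ∧
    {x : Fin d → ℝ | x ∈ Λ ∧ Pibar d x ≤ ‖x‖ ^ (-γ)}.Infinite}

/-- `Λ` is a lattice of full rank in `ℝ^d` of covolume `1`. -/
def IsUnimodularLattice (d : ℕ) (Λ : Set (Fin d → ℝ)) : Prop :=
  ∃ A : Matrix (Fin d) (Fin d) ℝ, |A.det| = 1 ∧
    Λ = {x | ∃ z : Fin d → ℤ, x = A.mulVec fun i => (z i : ℝ)}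

/-- `λ₁(B_τ)`: the first successive minimum with respect to `Λ` of the box
`B_τ = {x : |x_i| ≤ e^{τ_i}}`. -/
def firstMin (d : ℕ) (Λ : Set (Fin d → ℝ)) (τ : Fin d → ℝ) : ℝ :=
  sInf {l : ℝ | 0 < l ∧ ∃ x ∈ Λ, x ≠ 0 ∧ ∀ i, |x i| ≤ l * Real.exp (τ i)}

/-- `|τ|₊ = max {τ_i : τ_i ≥ 0}`. -/
def tauPlus (d : ℕ) (τ : Fin d → ℝ) : ℝ :=
  sSup {t : ℝ | 0 ≤ t ∧ ∃ i, τ i = t}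

/-- The first Schmidt–Summerer lower exponent
`ψ̲₁(Λ) = liminf_{|τ|→∞} L₁(τ)/|τ|₊`, the liminf being over `τ` in the hyperplane
`τ₁ + ⋯ + τ_d = 0`, where `L₁(τ) = log λ₁(B_τ)`. -/
def psi1 (d : ℕ) (Λ : Set (Fin d → ℝ)) : ℝ :=
  Filter.liminf
    (fun τ : {τ : Fin d → ℝ // ∑ i, τ i = 0} =>
      Real.log (firstMin d Λ τ.1) / tauPlus d τ.1)
    (Filter.comap (fun τ : {τ : Fin d → ℝ // ∑ i, τ i = 0} => ‖τ.1‖) Filter.atTop)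

set_option maxHeartbeats 1000000

section S18aux

namespace S18

open Filter Real Set MeasureTheory Submodule
open scoped ENNReal NNReal

variable {d : ℕ}

def Lat (d : ℕ) (A : Matrix (Fin d) (Fin d) ℝ) : Set (Fin d → ℝ) :=
  {x | ∃ z : Fin d → ℤ, x = A.mulVec fun i => (z i : ℝ)}

variable {A : Matrix (Fin d) (Fin d) ℝ}

lemma det_isUnit (hdet : |A.det| = 1) : IsUnit A.det := by
  refine isUnit_iff_ne_zero.mpr fun h => ?_
  rw [h] at hdet; simp at hdet

lemma zero_mem_lat : (0 : Fin d → ℝ) ∈ Lat d A := by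
  refine ⟨0, ?_⟩
  have : (fun i => (((0 : Fin d → ℤ) i) : ℝ)) = (0 : Fin d → ℝ) := by funext i; simp
  rw [this, Matrix.mulVec_zero]

lemma smul_mem_lat {x : Fin d → ℝ} (hx : x ∈ Lat d A) (k : ℤ) :
    (k : ℝ) • x ∈ Lat d A := by
  obtain ⟨z, rfl⟩ := hx
  refine ⟨k • z, ?_⟩
  have : (fun i => (((k • z) i : ℤ) : ℝ)) = (k : ℝ) • fun i => ((z i : ℤ) : ℝ) := by
    funext i; simp
  rw [this, Matrix.mulVec_smul]

/-- The lattice has finitely many points in any ball. -/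
lemma lat_finite (hdet : |A.det| = 1) (R : ℝ) :
    {x | x ∈ Lat d A ∧ ‖x‖ ≤ R}.Finite := by
  have hunit := det_isUnit hdet
  set B := A⁻¹ with hB
  have hBA : B * A = 1 := Matrix.nonsing_inv_mul A hunit
  set C : ℝ := (∑ i : Fin d, ∑ j : Fin d, |B i j|) + 1 with hC
  have hC0 : 0 ≤ C := by positivity
  set N : ℤ := ⌈C * |R|⌉ with hN
  have key : {x | x ∈ Lat d A ∧ ‖x‖ ≤ R} ⊆
      (fun z : Fin d → ℤ => A.mulVec fun i => (z i : ℝ)) ''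
        (Set.pi Set.univ fun _ : Fin d => Set.Icc (-N) N) := by
    rintro x ⟨⟨z, hxz⟩, hxR⟩
    refine ⟨z, fun i _ => ?_, hxz.symm⟩
    set v : Fin d → ℝ := fun i => (z i : ℝ) with hv
    have hz : v = B.mulVec x := by
      rw [hxz, Matrix.mulVec_mulVec, hBA, Matrix.one_mulVec]
    have hzi : |(z i : ℝ)| ≤ (N : ℝ) := by
      have h1 : (z i : ℝ) = ∑ j, B i j * x j := congrFun hz i
      have h2 : |(z i : ℝ)| ≤ (∑ j, |B i j|) * |R| := by
        rw [h1, Finset.sum_mul]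
        refine (Finset.abs_sum_le_sum_abs _ _).trans ?_
        refine Finset.sum_le_sum fun j _ => ?_
        rw [abs_mul]
        refine mul_le_mul_of_nonneg_left ?_ (abs_nonneg _)
        have h3 := norm_le_pi_norm x j
        rw [Real.norm_eq_abs] at h3
        exact h3.trans (hxR.trans (le_abs_self R))
      refine h2.trans (le_trans ?_ (Int.le_ceil _))
      have h4 : ∑ j, |B i j| ≤ ∑ i : Fin d, ∑ j : Fin d, |B i j| :=
        Finset.single_le_sum (f := fun i => ∑ j, |B i j|)
          (fun _ _ => Finset.sum_nonneg fun _ _ => abs_nonneg _) (Finset.mem_univ i)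
      have h5 : (0:ℝ) ≤ ∑ j, |B i j| := Finset.sum_nonneg fun _ _ => abs_nonneg _
      rw [hC]
      nlinarith [abs_nonneg R]
    constructor
    · have h6 := (abs_le.mp hzi).1
      exact_mod_cast h6
    · have h6 := (le_abs_self ((z i : ℝ))).trans hzi
      exact_mod_cast h6
  exact Set.Finite.subset (Set.Finite.image _ (Set.Finite.pi fun _ => Set.finite_Icc _ _)) key

/-- Minkowski: the box `(1+ε) B_τ` contains a nonzero lattice point when `∑ τ = 0`. -/
lemma mink (hdet : |A.det| = 1) (τ : Fin d → ℝ) (hτ : ∑ i, τ i = 0)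
    {ε : ℝ} (hε : 0 < ε) (hd : 0 < d) :
    ∃ x ∈ Lat d A, x ≠ 0 ∧ ∀ i, |x i| ≤ (1 + ε) * Real.exp (τ i) := by
  classical
  have hunit := det_isUnit hdet
  have hinv : Invertible A := A.invertibleOfIsUnitDet hunit
  set b : Module.Basis (Fin d) ℝ (Fin d → ℝ) := (Pi.basisFun ℝ (Fin d)).map (A.toLinearEquiv' hinv)
    with hb
  have hbi : ∀ i j, b i j = A j i := by
    intro i j
    simp only [hb, Module.Basis.map_apply, Pi.basisFun_apply]
    show (Matrix.toLin' A) (Pi.single i 1) j = A j i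
    simp [Matrix.toLin'_apply, Matrix.mulVec, dotProduct, Pi.single_apply]
  have hspan : ∀ x : Fin d → ℝ, x ∈ span ℤ (Set.range ⇑b) → x ∈ Lat d A := by
    intro x hx
    rw [mem_span_range_iff_exists_fun] at hx
    obtain ⟨c, hc⟩ := hx
    refine ⟨c, ?_⟩
    rw [← hc]
    funext j
    simp only [Finset.sum_apply, Pi.smul_apply, Matrix.mulVec, dotProduct]
    refine Finset.sum_congr rfl fun i _ => ?_
    rw [hbi i j, zsmul_eq_mul]
    ring
  -- fundamental domain volume
  have hvol : volume (ZSpan.fundamentalDomain b) = 1 := by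
    rw [ZSpan.volume_fundamentalDomain]
    have hM : (Matrix.of ⇑b) = A.transpose := by
      ext i j
      simp only [Matrix.of_apply, Matrix.transpose_apply]
      exact hbi i j
    rw [hM, Matrix.det_transpose, hdet, ENNReal.ofReal_one]
  -- the box
  set r : Fin d → ℝ := fun i => (1 + ε) * Real.exp (τ i) with hr
  have hr0 : ∀ i, 0 < r i := fun i => by positivity
  set s : Set (Fin d → ℝ) := Set.pi Set.univ fun i => Set.Icc (-(r i)) (r i) with hs
  have hsmem : ∀ x : Fin d → ℝ, x ∈ s ↔ ∀ i, |x i| ≤ r i := by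
    intro x
    constructor
    · intro hx i
      have h := hx i (Set.mem_univ i)
      rw [Set.mem_Icc] at h
      exact abs_le.mpr h
    · intro hx i _
      rw [Set.mem_Icc]
      exact abs_le.mp (hx i)
  have hvols : volume s = ENNReal.ofReal ((2 * (1 + ε)) ^ d) := by
    rw [hs, volume_pi_pi]
    have : ∀ i : Fin d, volume (Set.Icc (-(r i)) (r i)) = ENNReal.ofReal (2 * r i) := by
      intro i; rw [Real.volume_Icc]; ring_nf
    simp_rw [this]
    rw [← ENNReal.ofReal_prod_of_nonneg (fun i _ => by positivity)]
    congr 1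
    have : ∀ i : Fin d, 2 * r i = (2 * (1 + ε)) * Real.exp (τ i) := fun i => by rw [hr]; ring
    simp_rw [this]
    rw [Finset.prod_mul_distrib, Finset.prod_const, ← Real.exp_sum, hτ, Real.exp_zero,
      Finset.card_univ, Fintype.card_fin, mul_one]
  haveI : Countable (span ℤ (Set.range ⇑b)).toAddSubgroup :=
    inferInstanceAs <| Countable (span ℤ (Set.range ⇑b))
  have hineq : volume (ZSpan.fundamentalDomain b) * 2 ^ Module.finrank ℝ (Fin d → ℝ)
      < volume s := by
    rw [hvol, hvols, one_mul, Module.finrank_fin_fun]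
    have h2 : (2 : ℝ≥0∞) ^ d = ENNReal.ofReal (2 ^ d) := by
      rw [ENNReal.ofReal_pow (by norm_num : (0:ℝ) ≤ 2)]
      norm_num
    rw [h2, ENNReal.ofReal_lt_ofReal_iff (by positivity)]
    rw [mul_pow]
    have h3 : (1 : ℝ) < (1 + ε) ^ d := by
      refine one_lt_pow₀ (by linarith) (by omega)
    nlinarith [pow_pos (show (0:ℝ) < 2 by norm_num) d]
  obtain ⟨u, hu0, hus⟩ :=
    exists_ne_zero_mem_lattice_of_measure_mul_two_pow_lt_measure
      (ZSpan.isAddFundamentalDomain' b volume)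
      (fun x hx => by
        rw [hsmem] at hx ⊢
        intro i; rw [Pi.neg_apply, abs_neg]; exact hx i)
      (convex_pi fun i _ => convex_Icc _ _) hineq
  refine ⟨(u : Fin d → ℝ), hspan _ u.2, ?_, ?_⟩
  · intro h
    exact hu0 (by ext; exact congrFun h _)
  · exact (hsmem _).mp hus


section Chunk2

variable {A : Matrix (Fin d) (Fin d) ℝ}

lemma pibar_zero (hd : 0 < d) {x : Fin d → ℝ} {i : Fin d} (hxi : x i = 0) :
    Pibar d x = 0 := by
  unfold Pibar
  refine Finset.prod_eq_zero (Finset.mem_univ i) ?_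
  rw [hxi, abs_zero]
  exact Real.zero_rpow (one_div_ne_zero (Nat.cast_ne_zero.mpr hd.ne'))

lemma pibar_pos {x : Fin d → ℝ} (hx : ∀ i, x i ≠ 0) : 0 < Pibar d x :=
  Finset.prod_pos fun i _ => Real.rpow_pos_of_pos (abs_pos.mpr (hx i)) _

lemma pibar_le_of_box (hd : 0 < d) {τ : Fin d → ℝ} (hτ : ∑ i, τ i = 0)
    {l : ℝ} (hl : 0 < l) {x : Fin d → ℝ} (hx : ∀ i, |x i| ≤ l * Real.exp (τ i)) :
    Pibar d x ≤ l := by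
  have hd' : (0:ℝ) < (d:ℝ) := Nat.cast_pos.mpr hd
  have step1 : Pibar d x ≤ ∏ i, (l * Real.exp (τ i)) ^ (1 / (d:ℝ)) := by
    refine Finset.prod_le_prod (fun i _ => Real.rpow_nonneg (abs_nonneg _) _) ?_
    exact fun i _ => Real.rpow_le_rpow (abs_nonneg _) (hx i) (by positivity)
  have step2 : ∀ i : Fin d, (l * Real.exp (τ i)) ^ (1 / (d:ℝ))
      = Real.exp ((Real.log l + τ i) * (1 / (d:ℝ))) := by
    intro i
    have h1 : l * Real.exp (τ i) = Real.exp (Real.log l + τ i) := by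
      rw [Real.exp_add, Real.exp_log hl]
    rw [h1, Real.rpow_def_of_pos (Real.exp_pos _), Real.log_exp]
  have step3 : ∏ i, Real.exp ((Real.log l + τ i) * (1 / (d:ℝ))) = l := by
    rw [← Real.exp_sum, ← Finset.sum_mul, Finset.sum_add_distrib, hτ,
      Finset.sum_const, Finset.card_univ, Fintype.card_fin, add_zero]
    rw [nsmul_eq_mul]
    rw [mul_one_div, mul_comm (d:ℝ) (Real.log l), mul_div_assoc,
      div_self hd'.ne', mul_one, Real.exp_log hl]
  calc Pibar d x ≤ ∏ i, (l * Real.exp (τ i)) ^ (1 / (d:ℝ)) := step1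
    _ = ∏ i, Real.exp ((Real.log l + τ i) * (1 / (d:ℝ))) := by simp_rw [step2]
    _ = l := step3

lemma zero_coord_infinite (hd : 0 < d) {x : Fin d → ℝ} (hx : x ∈ Lat d A)
    (hx0 : x ≠ 0) {i : Fin d} (hxi : x i = 0) :
    {y | y ∈ Lat d A ∧ y ≠ 0 ∧ Pibar d y = 0}.Infinite := by
  obtain ⟨j, hj⟩ := Function.ne_iff.mp hx0
  rw [Pi.zero_apply] at hj
  refine Set.infinite_of_injective_forall_mem
    (f := fun n : ℕ => (((n : ℤ) + 1 : ℤ) : ℝ) • x) ?_ ?_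
  · intro m n h
    have h2 := congrFun h j
    simp only [Pi.smul_apply, smul_eq_mul] at h2
    have h3 : (((m : ℤ) + 1 : ℤ) : ℝ) = (((n : ℤ) + 1 : ℤ) : ℝ) :=
      mul_right_cancel₀ hj h2
    have h4 : m + 1 = n + 1 := by exact_mod_cast h3
    omega
  · intro n
    have hne : (((n : ℤ) + 1 : ℤ) : ℝ) ≠ 0 := by positivity
    refine ⟨smul_mem_lat hx _, smul_ne_zero hne hx0, ?_⟩
    refine pibar_zero hd (i := i) ?_
    simp [hxi]

lemma exists_pos_lb {α : Type*} {s : Set α} (hs : s.Finite) (f : α → ℝ)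
    (hf : ∀ x ∈ s, 0 < f x) : ∃ c : ℝ, 0 < c ∧ c ≤ 1 ∧ ∀ x ∈ s, c ≤ f x := by
  classical
  rcases Set.eq_empty_or_nonempty s with rfl | ⟨a, ha⟩
  · exact ⟨1, one_pos, le_rfl, by simp⟩
  · set t := hs.toFinset.image f with ht
    have htne : t.Nonempty := ⟨f a, Finset.mem_image.mpr ⟨a, hs.mem_toFinset.mpr ha, rfl⟩⟩
    refine ⟨min 1 (t.min' htne), ?_, min_le_left _ _, ?_⟩
    · rcases Finset.mem_image.mp (t.min'_mem htne) with ⟨y, hy, hfy⟩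
      have hy' := hf y (hs.mem_toFinset.mp hy)
      rw [hfy] at hy'
      exact lt_min one_pos hy'
    · intro y hy
      exact le_trans (min_le_right _ _)
        (t.min'_le _ (Finset.mem_image.mpr ⟨y, hs.mem_toFinset.mpr hy, rfl⟩))

lemma exists_c0 (hdet : |A.det| = 1) :
    ∃ c₀ : ℝ, 0 < c₀ ∧ c₀ ≤ 1 ∧ ∀ x ∈ Lat d A, x ≠ 0 → c₀ ≤ ‖x‖ := by
  have hfin : ({x | x ∈ Lat d A ∧ ‖x‖ ≤ 1} \ {0} : Set (Fin d → ℝ)).Finite :=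
    (lat_finite hdet 1).subset Set.diff_subset
  obtain ⟨c, hc0, hc1, hc⟩ := exists_pos_lb hfin (fun x => ‖x‖)
    (fun x hx => norm_pos_iff.mpr hx.2)
  refine ⟨c, hc0, hc1, fun x hx hx0 => ?_⟩
  rcases le_or_gt ‖x‖ 1 with h | h
  · exact hc x ⟨⟨hx, h⟩, hx0⟩
  · exact hc1.trans h.le

section Tau

variable {τ : Fin d → ℝ}

lemma exists_nonneg_coord (hd : 0 < d) (hτ : ∑ i, τ i = 0) : ∃ j, 0 ≤ τ j := by
  by_contra h
  push_neg at h
  haveI : Nonempty (Fin d) := Fin.pos_iff_nonempty.mp hd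
  have : ∑ i, τ i < 0 :=
    Finset.sum_neg (fun i _ => h i) Finset.univ_nonempty
  rw [hτ] at this
  exact lt_irrefl 0 this

lemma tauPlus_set_nonempty (hd : 0 < d) (hτ : ∑ i, τ i = 0) :
    {t : ℝ | 0 ≤ t ∧ ∃ i, τ i = t}.Nonempty := by
  obtain ⟨j, hj⟩ := exists_nonneg_coord hd hτ
  exact ⟨τ j, hj, j, rfl⟩

lemma tauPlus_set_bddAbove : BddAbove {t : ℝ | 0 ≤ t ∧ ∃ i, τ i = t} := by
  refine ⟨‖τ‖, fun t ht => ?_⟩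
  obtain ⟨-, i, rfl⟩ := ht
  have := norm_le_pi_norm τ i
  rw [Real.norm_eq_abs] at this
  exact (le_abs_self _).trans this

lemma tauPlus_nonneg (hd : 0 < d) (hτ : ∑ i, τ i = 0) : 0 ≤ tauPlus d τ := by
  obtain ⟨j, hj⟩ := exists_nonneg_coord hd hτ
  exact hj.trans (le_csSup tauPlus_set_bddAbove ⟨hj, j, rfl⟩)

lemma le_tauPlus (hd : 0 < d) (hτ : ∑ i, τ i = 0) (i : Fin d) : τ i ≤ tauPlus d τ := by
  rcases le_or_gt 0 (τ i) with h | h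
  · exact le_csSup tauPlus_set_bddAbove ⟨h, i, rfl⟩
  · exact h.le.trans (tauPlus_nonneg hd hτ)

lemma tauPlus_le (hd : 0 < d) (hτ : ∑ i, τ i = 0) {M : ℝ} (h0 : 0 ≤ M)
    (hM : ∀ i, τ i ≤ M) : tauPlus d τ ≤ M := by
  refine csSup_le (tauPlus_set_nonempty hd hτ) ?_
  rintro t ⟨-, i, rfl⟩
  exact hM i

lemma norm_le_tauPlus (hd : 0 < d) (hτ : ∑ i, τ i = 0) :
    ‖τ‖ ≤ 2 * d * tauPlus d τ := by
  have hmax : ∀ a : ℝ, max a 0 = (a + |a|) / 2 := by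
    intro a
    rcases le_or_gt 0 a with h | h
    · rw [max_eq_left h, abs_of_nonneg h]; ring
    · rw [max_eq_right h.le, abs_of_neg h]; ring
  have h2 : ∑ i, max (τ i) 0 = (∑ i, |τ i|) / 2 := by
    simp_rw [hmax]
    rw [← Finset.sum_div, Finset.sum_add_distrib, hτ, zero_add]
  have h3 : ‖τ‖ ≤ ∑ i, |τ i| := by
    refine (pi_norm_le_iff_of_nonneg (Finset.sum_nonneg fun i _ => abs_nonneg _)).mpr
      fun i => ?_
    rw [Real.norm_eq_abs]
    exact Finset.single_le_sum (f := fun i => |τ i|) (fun _ _ => abs_nonneg _)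
      (Finset.mem_univ i)
  have h4 : ∑ i, max (τ i) 0 ≤ (d : ℝ) * tauPlus d τ := by
    calc ∑ i, max (τ i) 0 ≤ ∑ _i : Fin d, tauPlus d τ :=
          Finset.sum_le_sum fun i _ =>
            max_le (le_tauPlus hd hτ i) (tauPlus_nonneg hd hτ)
      _ = (d : ℝ) * tauPlus d τ := by
          rw [Finset.sum_const, Finset.card_univ, Fintype.card_fin, nsmul_eq_mul]
  have := h2 ▸ h4
  linarith

end Tau

section FM

variable (A) in
def Sset (τ : Fin d → ℝ) : Set ℝ :=
  {l : ℝ | 0 < l ∧ ∃ x ∈ Lat d A, x ≠ 0 ∧ ∀ i, |x i| ≤ l * Real.exp (τ i)}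

lemma firstMin_eq (τ : Fin d → ℝ) : firstMin d (Lat d A) τ = sInf (Sset A τ) := rfl

variable {τ : Fin d → ℝ}

lemma Sset_bddBelow : BddBelow (Sset A τ) := ⟨0, fun l hl => hl.1.le⟩

lemma mem_Sset_of_mink (hdet : |A.det| = 1) (hτ : ∑ i, τ i = 0) (hd : 0 < d)
    {ε : ℝ} (hε : 0 < ε) : (1 + ε) ∈ Sset A τ := by
  obtain ⟨x, hx, hx0, hxb⟩ := mink hdet τ hτ hε hd
  exact ⟨by linarith, x, hx, hx0, hxb⟩

lemma Sset_nonempty (hdet : |A.det| = 1) (hτ : ∑ i, τ i = 0) (hd : 0 < d) :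
    (Sset A τ).Nonempty :=
  ⟨1 + 1, mem_Sset_of_mink hdet hτ hd one_pos⟩

lemma firstMin_le_mem {l : ℝ} (hl : l ∈ Sset A τ) : firstMin d (Lat d A) τ ≤ l :=
  csInf_le Sset_bddBelow hl

lemma le_firstMin (hdet : |A.det| = 1) (hτ : ∑ i, τ i = 0) (hd : 0 < d) {m : ℝ}
    (hm : ∀ l ∈ Sset A τ, m ≤ l) : m ≤ firstMin d (Lat d A) τ :=
  le_csInf (Sset_nonempty hdet hτ hd) hm

lemma norm_le_of_Sset {l : ℝ} (hl : l ∈ Sset A τ) (hd : 0 < d) (hτ : ∑ i, τ i = 0) :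
    ∃ x ∈ Lat d A, x ≠ 0 ∧ ‖x‖ ≤ l * Real.exp (tauPlus d τ) ∧
      ∀ i, |x i| ≤ l * Real.exp (τ i) := by
  obtain ⟨hl0, x, hx, hx0, hxb⟩ := hl
  refine ⟨x, hx, hx0, ?_, hxb⟩
  refine (pi_norm_le_iff_of_nonneg (by positivity)).mpr fun i => ?_
  rw [Real.norm_eq_abs]
  refine (hxb i).trans ?_
  exact mul_le_mul_of_nonneg_left (Real.exp_le_exp.mpr (le_tauPlus hd hτ i)) hl0.le

lemma firstMin_lb (hdet : |A.det| = 1) (hτ : ∑ i, τ i = 0) (hd : 0 < d)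
    {c₀ : ℝ} (hc₀ : 0 < c₀) (hc : ∀ x ∈ Lat d A, x ≠ 0 → c₀ ≤ ‖x‖) :
    c₀ * Real.exp (-(tauPlus d τ)) ≤ firstMin d (Lat d A) τ := by
  refine le_firstMin hdet hτ hd fun l hl => ?_
  obtain ⟨x, hx, hx0, hxn, -⟩ := norm_le_of_Sset hl hd hτ
  have h1 : c₀ ≤ l * Real.exp (tauPlus d τ) := (hc x hx hx0).trans hxn
  have h2 : c₀ * Real.exp (-(tauPlus d τ))
      ≤ (l * Real.exp (tauPlus d τ)) * Real.exp (-(tauPlus d τ)) :=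
    mul_le_mul_of_nonneg_right h1 (Real.exp_pos _).le
  rwa [mul_assoc, ← Real.exp_add, add_neg_cancel, Real.exp_zero, mul_one] at h2

lemma firstMin_pos (hdet : |A.det| = 1) (hτ : ∑ i, τ i = 0) (hd : 0 < d)
    {c₀ : ℝ} (hc₀ : 0 < c₀) (hc : ∀ x ∈ Lat d A, x ≠ 0 → c₀ ≤ ‖x‖) :
    0 < firstMin d (Lat d A) τ :=
  lt_of_lt_of_le (by positivity) (firstMin_lb hdet hτ hd hc₀ hc)

end FM

end Chunk2


section Chunk3

variable {A : Matrix (Fin d) (Fin d) ℝ}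

abbrev Hyp (d : ℕ) := {τ : Fin d → ℝ // ∑ i, τ i = 0}

def FF (d : ℕ) : Filter (Hyp d) :=
  Filter.comap (fun τ : Hyp d => ‖τ.1‖) Filter.atTop

lemma psi1_eq (Λ : Set (Fin d → ℝ)) :
    psi1 d Λ = Filter.liminf
      (fun τ : Hyp d => Real.log (firstMin d Λ τ.1) / tauPlus d τ.1) (FF d) := rfl

/-- A vector in the hyperplane: first entry `s`, remaining entries `-s/(d-1)`. -/
lemma hyp_vec (hd : 2 ≤ d) (s : ℝ) :
    ∃ τ : Fin d → ℝ, (∑ i, τ i = 0) ∧ τ ⟨0, by omega⟩ = s ∧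
      ∀ i : Fin d, i ≠ ⟨0, by omega⟩ → τ i = -s / ((d : ℝ) - 1) := by
  have hd1 : (1:ℝ) ≤ (d:ℝ) := by exact_mod_cast Nat.one_le_of_lt hd
  have hdne : (d:ℝ) - 1 ≠ 0 := by
    have : (2:ℝ) ≤ (d:ℝ) := by exact_mod_cast hd
    linarith
  set i0 : Fin d := ⟨0, by omega⟩
  refine ⟨fun i => if i = i0 then s else -s / ((d : ℝ) - 1), ?_, if_pos rfl,
    fun i hi => if_neg hi⟩
  rw [← Finset.add_sum_erase _ _ (Finset.mem_univ i0), if_pos rfl]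
  have h1 : ∀ i ∈ Finset.univ.erase i0,
      (if i = i0 then s else -s / ((d : ℝ) - 1)) = -s / ((d : ℝ) - 1) := by
    intro i hi
    exact if_neg (Finset.mem_erase.mp hi).1
  rw [Finset.sum_congr rfl h1, Finset.sum_const, Finset.card_erase_of_mem (Finset.mem_univ i0),
    Finset.card_univ, Fintype.card_fin, nsmul_eq_mul]
  have h2 : ((d - 1 : ℕ) : ℝ) = (d : ℝ) - 1 := by
    have : 1 ≤ d := by omega
    push_cast [Nat.cast_sub this]
    ring
  rw [h2]
  field_simp
  ring

lemma exists_hyp_norm (hd : 2 ≤ d) (t : ℝ) : ∃ τ : Hyp d, t ≤ ‖τ.1‖ := by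
  obtain ⟨τ, hτ, h0, -⟩ := hyp_vec hd (max t 0)
  refine ⟨⟨τ, hτ⟩, ?_⟩
  have h1 := norm_le_pi_norm τ ⟨0, by omega⟩
  rw [Real.norm_eq_abs, h0, abs_of_nonneg (le_max_right t 0)] at h1
  exact le_trans (le_max_left t 0) h1

lemma FF_neBot (hd : 2 ≤ d) : (FF d).NeBot := by
  refine Filter.comap_neBot fun t ht => ?_
  obtain ⟨a, ha⟩ := Filter.mem_atTop_sets.mp ht
  obtain ⟨τ, hτ⟩ := exists_hyp_norm hd a
  exact ⟨τ, ha _ hτ⟩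

lemma eventually_FF {p : Hyp d → Prop} (h : ∃ t : ℝ, ∀ τ : Hyp d, t ≤ ‖τ.1‖ → p τ) :
    ∀ᶠ τ in FF d, p τ := by
  obtain ⟨t, ht⟩ := h
  rw [FF, Filter.eventually_comap]
  filter_upwards [Filter.eventually_ge_atTop t] with b hb τ hτ
  exact ht τ (le_of_le_of_eq hb hτ.symm)

lemma frequently_FF {p : Hyp d → Prop} (h : ∀ t : ℝ, ∃ τ : Hyp d, t ≤ ‖τ.1‖ ∧ p τ) :
    ∃ᶠ τ in FF d, p τ := by
  rw [FF, Filter.frequently_comap, Filter.frequently_atTop]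
  intro a
  obtain ⟨τ, h1, h2⟩ := h a
  exact ⟨‖τ.1‖, h1, τ, rfl, h2⟩

/-- Key eventual lower bound `-1 - ε`. -/
lemma ev_lb (hdet : |A.det| = 1) (hd : 2 ≤ d) {ε : ℝ} (hε : 0 < ε) :
    ∀ᶠ τ in FF d, -1 - ε ≤ Real.log (firstMin d (Lat d A) τ.1) / tauPlus d τ.1 := by
  have hd0 : 0 < d := by omega
  obtain ⟨c₀, hc0, hc1, hc⟩ := exists_c0 (A := A) hdet
  refine eventually_FF ⟨2 * d * (|Real.log c₀| / ε + 1), fun τ hτn => ?_⟩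
  obtain ⟨τ', hτ⟩ := τ
  simp only at hτn ⊢
  set T := tauPlus d τ' with hT
  have h2d : (0:ℝ) < 2 * d := by positivity
  have hTlb : |Real.log c₀| / ε + 1 ≤ T := by
    have h := (norm_le_tauPlus hd0 hτ).trans' hτn
    exact le_of_mul_le_mul_left h h2d
  have hT0 : 0 < T := lt_of_lt_of_le (by positivity) hTlb
  have hfm := firstMin_lb hdet hτ hd0 hc0 hc
  have hfm0 : 0 < firstMin d (Lat d A) τ' := firstMin_pos hdet hτ hd0 hc0 hc
  have hlog : Real.log c₀ - T ≤ Real.log (firstMin d (Lat d A) τ') := by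
    have := Real.log_le_log (by positivity) hfm
    rwa [Real.log_mul hc0.ne' (Real.exp_pos _).ne', Real.log_exp] at this
  rw [le_div_iff₀ hT0]
  have hε1 : |Real.log c₀| ≤ ε * T := by
    have h3 : |Real.log c₀| / ε ≤ T - 1 := by linarith
    rw [div_le_iff₀ hε] at h3
    nlinarith
  nlinarith [neg_abs_le (Real.log c₀)]

lemma isBoundedUnder_ge (hdet : |A.det| = 1) (hd : 2 ≤ d) :
    (FF d).IsBoundedUnder (· ≥ ·)
      (fun τ : Hyp d => Real.log (firstMin d (Lat d A) τ.1) / tauPlus d τ.1) := by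
  refine ⟨-1 - 1, ?_⟩
  rw [Filter.eventually_map]
  exact ev_lb hdet hd one_pos

lemma ev_ub (hdet : |A.det| = 1) (hd : 2 ≤ d) :
    ∀ᶠ τ in FF d, Real.log (firstMin d (Lat d A) τ.1) / tauPlus d τ.1 ≤ 1 := by
  have hd0 : 0 < d := by omega
  refine eventually_FF ⟨2 * d, fun τ hτn => ?_⟩
  obtain ⟨τ', hτ⟩ := τ
  simp only at hτn ⊢
  set T := tauPlus d τ' with hT
  have h2d : (0:ℝ) < 2 * d := by positivity
  have hT1 : 1 ≤ T := by
    have h := (norm_le_tauPlus hd0 hτ).trans' hτn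
    have h' : 2 * (d:ℝ) * 1 ≤ 2 * (d:ℝ) * T := by linarith
    exact le_of_mul_le_mul_left h' h2d
  have hfm : firstMin d (Lat d A) τ' ≤ 2 :=
    le_of_le_of_eq (firstMin_le_mem (mem_Sset_of_mink hdet hτ hd0 one_pos)) (by norm_num)
  obtain ⟨c₀, hc0, hc1, hc⟩ := exists_c0 (A := A) hdet
  have hfm0 : 0 < firstMin d (Lat d A) τ' := firstMin_pos hdet hτ hd0 hc0 hc
  rcases le_or_gt (Real.log (firstMin d (Lat d A) τ')) 0 with h | h
  · exact le_trans (div_nonpos_of_nonpos_of_nonneg h (by linarith)) zero_le_one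
  · refine le_trans (div_le_self h.le hT1) ?_
    have h2 : Real.log (firstMin d (Lat d A) τ') ≤ Real.log 2 := Real.log_le_log hfm0 hfm
    have h3 : Real.log 2 ≤ 2 - 1 := Real.log_le_sub_one_of_pos two_pos
    linarith

lemma isCoboundedUnder_ge (hdet : |A.det| = 1) (hd : 2 ≤ d) :
    (FF d).IsCoboundedUnder (· ≥ ·)
      (fun τ : Hyp d => Real.log (firstMin d (Lat d A) τ.1) / tauPlus d τ.1) := by
  haveI := FF_neBot (d := d) hd
  refine Filter.IsBoundedUnder.isCoboundedUnder_ge ⟨1, ?_⟩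
  rw [Filter.eventually_map]
  exact ev_ub hdet hd

end Chunk3


section Chunk4

variable {A : Matrix (Fin d) (Fin d) ℝ}

lemma le_of_eps {a b : ℝ} (h : ∀ ε : ℝ, 0 < ε → a ≤ b + ε) : a ≤ b := by
  by_contra hc
  push_neg at hc
  have := h ((a - b)/2) (by linarith)
  linarith

variable (A) in
def Eset (γ : ℝ) : Set (Fin d → ℝ) :=
  {x | x ∈ Lat d A ∧ Pibar d x ≤ ‖x‖ ^ (-γ)}

lemma exists_S2_elt (hdet : |A.det| = 1) (hd : 2 ≤ d) (n : ℕ) :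
    ∃ x ∈ Lat d A, x ≠ 0 ∧ Pibar d x ≤ 2 ∧
      ∀ i : Fin d, i ≠ ⟨0, by omega⟩ → |x i| ≤ 2 * Real.exp (-(n:ℝ) / ((d:ℝ) - 1)) := by
  obtain ⟨τ, hτ, h0, hrest⟩ := hyp_vec hd (n : ℝ)
  obtain ⟨x, hx, hx0, hxb⟩ := mink hdet τ hτ one_pos (by omega)
  have hxb' : ∀ i, |x i| ≤ 2 * Real.exp (τ i) := by
    intro i
    have := hxb i
    norm_num at this
    exact this
  refine ⟨x, hx, hx0, pibar_le_of_box (by omega) hτ (by norm_num) hxb', fun i hi => ?_⟩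
  have := hxb' i
  rwa [hrest i hi] at this

lemma S2_infinite (hdet : |A.det| = 1) (hd : 2 ≤ d) :
    {x | x ∈ Lat d A ∧ x ≠ 0 ∧ Pibar d x ≤ 2}.Infinite := by
  have hd0 : 0 < d := by omega
  set i0 : Fin d := ⟨0, by omega⟩ with hi0
  set i1 : Fin d := ⟨1, by omega⟩ with hi1
  set S2 := {x | x ∈ Lat d A ∧ x ≠ 0 ∧ Pibar d x ≤ 2} with hS2
  by_contra hfin
  rw [Set.not_infinite] at hfin
  have H : ∀ n : ℕ, ∃ x : Fin d → ℝ, x ∈ S2 ∧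
      ∀ i : Fin d, i ≠ i0 → |x i| ≤ 2 * Real.exp (-(n:ℝ) / ((d:ℝ) - 1)) := by
    intro n
    obtain ⟨x, hx, hx0, hP, hsm⟩ := exists_S2_elt hdet hd n
    exact ⟨x, ⟨hx, hx0, hP⟩, hsm⟩
  choose f hf1 hf2 using H
  haveI : Finite ↥S2 := hfin.to_subtype
  obtain ⟨y, hy⟩ := Finite.exists_infinite_fiber (fun n : ℕ => (⟨f n, hf1 n⟩ : ↥S2))
  have hyInf : {n : ℕ | f n = (y : Fin d → ℝ)}.Infinite := by
    refine Set.Infinite.mono ?_ (Set.infinite_coe_iff.mp hy)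
    intro n hn
    rw [Set.mem_preimage, Set.mem_singleton_iff] at hn
    exact congrArg Subtype.val hn
  set x : Fin d → ℝ := (y : Fin d → ℝ) with hx
  have hxS2 : x ∈ S2 := y.2
  have hzero : x i1 = 0 := by
    by_contra hne
    have hpos : 0 < |x i1| := abs_pos.mpr hne
    have hd1 : (0:ℝ) < (d:ℝ) - 1 := by
      have : (2:ℝ) ≤ (d:ℝ) := by exact_mod_cast hd
      linarith
    set n₀ : ℕ := Nat.ceil (((d:ℝ) - 1) * Real.log (2 / |x i1|)) with hn₀
    obtain ⟨m, hm, hmgt⟩ := hyInf.exists_gt n₀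
    have hbm := hf2 m i1 (by
      intro h
      rw [hi1, hi0] at h
      exact absurd (congrArg Fin.val h) (by norm_num))
    rw [Set.mem_setOf_eq.mp hm] at hbm
    have hmlog : ((d:ℝ) - 1) * Real.log (2 / |x i1|) < (m : ℝ) :=
      lt_of_le_of_lt (Nat.le_ceil _) ((Nat.cast_lt (α := ℝ)).mpr hmgt)
    have hlt : Real.exp (-(m:ℝ) / ((d:ℝ) - 1)) < |x i1| / 2 := by
      rw [← Real.exp_log (by positivity : (0:ℝ) < |x i1| / 2)]
      rw [Real.exp_lt_exp]
      have hlog2 : Real.log (2 / |x i1|) = - Real.log (|x i1| / 2) := by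
        rw [← Real.log_inv]
        congr 1
        field_simp
      rw [hlog2] at hmlog
      rw [div_lt_iff₀ hd1]
      nlinarith
    have : |x i1| < |x i1| := lt_of_le_of_lt hbm (by linarith)
    exact lt_irrefl _ this
  have hinf0 := zero_coord_infinite hd0 hxS2.1 hxS2.2.1 hzero
  refine (hinf0.mono ?_) hfin
  rintro z ⟨hz1, hz2, hz3⟩
  exact ⟨hz1, hz2, by rw [hz3]; norm_num⟩

lemma Eset_infinite_neg (hdet : |A.det| = 1) (hd : 2 ≤ d) {γ : ℝ} (hγ : γ < 0) :
    (Eset A γ).Infinite := by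
  set R₀ : ℝ := max 1 ((2:ℝ) ^ (1/(-γ))) with hR₀
  refine ((S2_infinite hdet hd).diff (lat_finite hdet R₀)).mono ?_
  rintro x ⟨⟨hxL, hx0, hxP⟩, hxB⟩
  have hxn : R₀ < ‖x‖ := by
    by_contra h
    push_neg at h
    exact hxB ⟨hxL, h⟩
  refine ⟨hxL, hxP.trans ?_⟩
  have h1 : (2:ℝ) = ((2:ℝ) ^ (1/(-γ))) ^ (-γ) := by
    rw [← Real.rpow_mul (by norm_num : (0:ℝ) ≤ 2), one_div,
      inv_mul_cancel₀ (neg_ne_zero.mpr hγ.ne), Real.rpow_one]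
  calc (2:ℝ) = ((2:ℝ) ^ (1/(-γ))) ^ (-γ) := h1
    _ ≤ ‖x‖ ^ (-γ) := by
        refine Real.rpow_le_rpow (Real.rpow_nonneg (by norm_num) _) ?_ (by linarith)
        exact le_trans (le_max_right 1 _) hxn.le

lemma Eset_mono (hdet : |A.det| = 1) {γ γ₁ : ℝ} (h : γ ≤ γ₁)
    (hinf : (Eset A γ₁).Infinite) : (Eset A γ).Infinite := by
  refine (hinf.diff (lat_finite hdet 1)).mono ?_
  rintro x ⟨⟨hxL, hxP⟩, hxB⟩
  have hxn : 1 < ‖x‖ := by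
    by_contra hh
    push_neg at hh
    exact hxB ⟨hxL, hh⟩
  exact ⟨hxL, hxP.trans (Real.rpow_le_rpow_of_exponent_le hxn.le (by linarith))⟩

lemma psi1_ge_neg_one (hdet : |A.det| = 1) (hd : 2 ≤ d) : -1 ≤ psi1 d (Lat d A) := by
  rw [psi1_eq]
  have key : ∀ ε : ℝ, 0 < ε → (-1 : ℝ) ≤ Filter.liminf
      (fun τ : Hyp d => Real.log (firstMin d (Lat d A) τ.1) / tauPlus d τ.1) (FF d) + ε := by
    intro ε hε
    have h1 := Filter.le_liminf_of_le (isCoboundedUnder_ge hdet hd) (ev_lb hdet hd hε)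
    linarith
  exact le_of_eps key

lemma psi1_le_zero (hdet : |A.det| = 1) (hd : 2 ≤ d) : psi1 d (Lat d A) ≤ 0 := by
  have hd0 : 0 < d := by omega
  rw [psi1_eq]
  refine le_of_eps fun ε hε => ?_
  rw [zero_add]
  refine Filter.liminf_le_of_frequently_le ?_ (isBoundedUnder_ge hdet hd)
  haveI := FF_neBot (d := d) hd
  refine Filter.Eventually.frequently (eventually_FF ⟨2 * d * (1/ε + 1), fun τ hτn => ?_⟩)
  obtain ⟨τ', hτ⟩ := τ
  simp only at hτn ⊢
  set T := tauPlus d τ' with hT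
  have h2d : (0:ℝ) < 2 * d := by positivity
  have hTlb : 1/ε + 1 ≤ T := by
    have h := (norm_le_tauPlus hd0 hτ).trans' hτn
    exact le_of_mul_le_mul_left h h2d
  have hT0 : 0 < T := lt_of_lt_of_le (by positivity) hTlb
  obtain ⟨c₀, hc0, hc1, hc⟩ := exists_c0 (A := A) hdet
  have hfm0 : 0 < firstMin d (Lat d A) τ' := firstMin_pos hdet hτ hd0 hc0 hc
  have hfm : firstMin d (Lat d A) τ' ≤ 2 :=
    le_of_le_of_eq (firstMin_le_mem (mem_Sset_of_mink hdet hτ hd0 one_pos)) (by norm_num)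
  rcases le_or_gt (Real.log (firstMin d (Lat d A) τ')) 0 with h | h
  · exact le_trans (div_nonpos_of_nonpos_of_nonneg h hT0.le) hε.le
  · have h2 : Real.log (firstMin d (Lat d A) τ') ≤ 1 := by
      have h3 : Real.log (firstMin d (Lat d A) τ') ≤ Real.log 2 := Real.log_le_log hfm0 hfm
      have h4 : Real.log 2 ≤ 2 - 1 := Real.log_le_sub_one_of_pos two_pos
      linarith
    rw [div_le_iff₀ hT0]
    have hεT : 1 ≤ ε * T := by
      have h5 : 1/ε ≤ T - 1 := by linarith
      rw [div_le_iff₀ hε] at h5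
      nlinarith
    nlinarith

/-- Upper bound: if `E_γ` is infinite for `γ ≥ 0` then `ψ₁ ≤ -γ/(1+γ)`. -/
lemma upperB (hdet : |A.det| = 1) (hd : 2 ≤ d) {γ : ℝ} (hγ0 : 0 ≤ γ)
    (hval : (Eset A γ).Infinite) : psi1 d (Lat d A) ≤ -γ / (1 + γ) := by
  have hd0 : 0 < d := by omega
  obtain ⟨c₀, hc0, hc1, hc⟩ := exists_c0 (A := A) hdet
  rw [psi1_eq]
  refine Filter.liminf_le_of_frequently_le ?_ (isBoundedUnder_ge hdet hd)
  refine frequently_FF fun t => ?_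
  set R : ℝ := max (Real.exp t) (Real.exp 1) with hR
  obtain ⟨x, hxE, hxB⟩ := ((hval.diff (lat_finite hdet R)).nonempty)
  obtain ⟨hxL, hxP⟩ := hxE
  have hxn : R < ‖x‖ := by
    by_contra h
    push_neg at h
    exact hxB ⟨hxL, h⟩
  have hR0 : 0 < R := lt_of_lt_of_le (Real.exp_pos 1) (le_max_right _ _)
  have hx0 : x ≠ 0 := by
    intro h
    rw [h, norm_zero] at hxn
    linarith
  have hxnorm0 : 0 < ‖x‖ := lt_trans hR0 hxn
  set a := Real.log ‖x‖ with ha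
  have ha1 : 1 < a := by
    have := Real.log_lt_log (Real.exp_pos 1) (lt_of_le_of_lt (le_max_right _ _) hxn)
    rwa [Real.log_exp] at this
  have hat : t ≤ a := by
    have := Real.log_lt_log (Real.exp_pos t) (lt_of_le_of_lt (le_max_left _ _) hxn)
    rw [Real.log_exp] at this
    exact this.le
  have h1γ : (0:ℝ) < 1 + γ := by linarith
  by_cases hall : ∀ i, x i ≠ 0
  · -- all coordinates nonzero
    set P := Pibar d x with hP
    have hP0 : 0 < P := pibar_pos hall
    have hPa : Real.log P ≤ -γ * a := by
      have h2 := Real.log_le_log hP0 hxP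
      rwa [Real.log_rpow hxnorm0] at h2
    set τ : Fin d → ℝ := fun i => Real.log |x i| - Real.log P with hτdef
    have hτi : ∀ i, τ i = Real.log |x i| - Real.log P := fun i => rfl
    have hlogP : Real.log P = (1/(d:ℝ)) * ∑ i, Real.log |x i| := by
      rw [hP]
      unfold Pibar
      rw [Real.log_prod (fun i _ =>
        (Real.rpow_pos_of_pos (abs_pos.mpr (hall i)) _).ne')]
      simp_rw [Real.log_rpow (abs_pos.mpr (hall _))]
      rw [← Finset.mul_sum]
    have hτsum : ∑ i, τ i = 0 := by
      simp_rw [hτi]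
      rw [Finset.sum_sub_distrib, Finset.sum_const, Finset.card_univ, Fintype.card_fin,
        nsmul_eq_mul, hlogP]
      have hdne : ((d:ℝ)) ≠ 0 := Nat.cast_ne_zero.mpr hd0.ne'
      field_simp
      ring
    have hmem : P ∈ Sset A τ := by
      refine ⟨hP0, x, hxL, hx0, fun i => le_of_eq ?_⟩
      rw [hτi i, Real.exp_sub, Real.exp_log hP0, Real.exp_log (abs_pos.mpr (hall i))]
      field_simp
    obtain ⟨j, -, hj⟩ := Finset.exists_max_image Finset.univ (fun i => |x i|)
      ⟨⟨0, hd0⟩, Finset.mem_univ _⟩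
    have hnj : ‖x‖ = |x j| := by
      refine le_antisymm ?_ ?_
      · refine (pi_norm_le_iff_of_nonneg (abs_nonneg _)).mpr fun i => ?_
        rw [Real.norm_eq_abs]
        exact hj i (Finset.mem_univ i)
      · have := norm_le_pi_norm x j
        rwa [Real.norm_eq_abs] at this
    have hτj : τ j = a - Real.log P := by rw [hτi j, ha, hnj]
    have hTub : tauPlus d τ ≤ a - Real.log P := by
      refine tauPlus_le hd0 hτsum (by nlinarith) fun i => ?_
      rw [hτi i]
      have h3 : |x i| ≤ ‖x‖ := by
        have := norm_le_pi_norm x i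
        rwa [Real.norm_eq_abs] at this
      have h4 : Real.log |x i| ≤ a := Real.log_le_log (abs_pos.mpr (hall i)) h3
      linarith
    have hTlb : a - Real.log P ≤ tauPlus d τ := hτj ▸ le_tauPlus hd0 hτsum j
    have hTeq : tauPlus d τ = a - Real.log P := le_antisymm hTub hTlb
    have hTpos : 0 < a - Real.log P := by nlinarith
    refine ⟨⟨τ, hτsum⟩, ?_, ?_⟩
    · show t ≤ ‖τ‖
      have h5 := norm_le_pi_norm τ j
      rw [Real.norm_eq_abs, hτj] at h5
      have h6 : a - Real.log P ≤ |a - Real.log P| := le_abs_self _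
      nlinarith
    · show Real.log (firstMin d (Lat d A) τ) / tauPlus d τ ≤ -γ / (1 + γ)
      have hfm0 : 0 < firstMin d (Lat d A) τ := firstMin_pos hdet hτsum hd0 hc0 hc
      have hfm_le : Real.log (firstMin d (Lat d A) τ) ≤ Real.log P :=
        Real.log_le_log hfm0 (firstMin_le_mem hmem)
      rw [hTeq]
      calc Real.log (firstMin d (Lat d A) τ) / (a - Real.log P)
          ≤ Real.log P / (a - Real.log P) := by
            exact (div_le_div_iff_of_pos_right hTpos).mpr hfm_le
        _ ≤ -γ / (1 + γ) := by
            rw [div_le_div_iff₀ hTpos h1γ]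
            nlinarith
  · -- some coordinate vanishes
    push_neg at hall
    obtain ⟨i₀, hi₀⟩ := hall
    classical
    set S : Finset (Fin d) := Finset.univ.filter (fun i => x i ≠ 0) with hSdef
    have hk1 : 0 < S.card := by
      obtain ⟨j, hj⟩ := Function.ne_iff.mp hx0
      rw [Pi.zero_apply] at hj
      exact Finset.card_pos.mpr ⟨j, Finset.mem_filter.mpr ⟨Finset.mem_univ j, hj⟩⟩
    have hkd : S.card < d := by
      have hi₀S : i₀ ∉ S := by
        rw [hSdef]
        simp [hi₀]
      calc S.card < Finset.univ.card := Finset.card_lt_card (Finset.ssubset_iff_of_subset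
          (Finset.subset_univ S) |>.mpr ⟨i₀, Finset.mem_univ i₀, hi₀S⟩)
        _ = d := by rw [Finset.card_univ, Fintype.card_fin]
    set K : ℝ := (S.card : ℝ) with hK
    set D : ℝ := (d : ℝ) with hD
    have hK0 : 0 < K := by rw [hK]; exact_mod_cast hk1
    have hDK : 0 < D - K := by
      rw [hK, hD]
      have : (S.card : ℝ) < (d : ℝ) := by exact_mod_cast hkd
      linarith
    set c : ℝ := γ * a with hcdef
    have hc0' : 0 ≤ c := by nlinarith
    have hac : 0 < a + c := by linarith
    set τ : Fin d → ℝ := fun i => if x i ≠ 0 then a + c else -(K * (a + c)) / (D - K)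
      with hτdef
    have hτi : ∀ i, τ i = if x i ≠ 0 then a + c else -(K * (a + c)) / (D - K) :=
      fun i => rfl
    have hτsum : ∑ i, τ i = 0 := by
      simp_rw [hτi]
      rw [← Finset.sum_filter_add_sum_filter_not Finset.univ (fun i => x i ≠ 0)]
      rw [Finset.sum_congr rfl (fun i hi => if_pos (Finset.mem_filter.mp hi).2),
        Finset.sum_congr rfl (fun i (hi : i ∈ Finset.univ.filter (fun i => ¬ x i ≠ 0)) =>
          if_neg (Finset.mem_filter.mp hi).2)]
      rw [Finset.sum_const, Finset.sum_const, nsmul_eq_mul, nsmul_eq_mul]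
      have h7 := Finset.card_filter_add_card_filter_not
        (s := Finset.univ) (p := fun i : Fin d => x i ≠ 0)
      rw [Finset.card_univ, Fintype.card_fin] at h7
      have h9 : ((Finset.univ.filter (fun i => x i ≠ 0)).card : ℝ)
          + ((Finset.univ.filter (fun i => ¬ x i ≠ 0)).card : ℝ) = (d:ℝ) := by
        exact_mod_cast congrArg (Nat.cast (R := ℝ)) h7
      have h10 : ((Finset.univ.filter (fun i => ¬ x i ≠ 0)).card : ℝ) = D - K := by
        rw [hD, hK, hSdef]
        linarith
      have h11 : ((Finset.univ.filter (fun i => x i ≠ 0)).card : ℝ) = K := by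
        rw [hK, hSdef]
      rw [h10, h11]
      field_simp
      ring
    have hmem : Real.exp (-c) ∈ Sset A τ := by
      refine ⟨Real.exp_pos _, x, hxL, hx0, fun i => ?_⟩
      rw [hτi i]
      by_cases hxi : x i ≠ 0
      · rw [if_pos hxi]
        have hnle : |x i| ≤ ‖x‖ := by
          have := norm_le_pi_norm x i
          rwa [Real.norm_eq_abs] at this
        have hexp : Real.exp (-c) * Real.exp (a + c) = ‖x‖ := by
          rw [← Real.exp_add]
          have harith : -c + (a + c) = a := by ring
          rw [harith, ha, Real.exp_log hxnorm0]
        rw [hexp]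
        exact hnle
      · rw [if_neg hxi]
        push_neg at hxi
        rw [hxi, abs_zero]
        positivity
    obtain ⟨j, hjS⟩ : ∃ j, x j ≠ 0 := by
      obtain ⟨j, hj⟩ := Function.ne_iff.mp hx0
      exact ⟨j, by rwa [Pi.zero_apply] at hj⟩
    have hτj : τ j = a + c := by rw [hτi j, if_pos hjS]
    have hTub : tauPlus d τ ≤ a + c := by
      refine tauPlus_le hd0 hτsum hac.le fun i => ?_
      rw [hτi i]
      by_cases hxi : x i ≠ 0
      · rw [if_pos hxi]
      · rw [if_neg hxi]
        have hneg : -(K * (a + c)) / (D - K) ≤ 0 :=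
          div_nonpos_of_nonpos_of_nonneg (by nlinarith) hDK.le
        linarith
    have hTlb : a + c ≤ tauPlus d τ := hτj ▸ le_tauPlus hd0 hτsum j
    have hTeq : tauPlus d τ = a + c := le_antisymm hTub hTlb
    refine ⟨⟨τ, hτsum⟩, ?_, ?_⟩
    · show t ≤ ‖τ‖
      have h5 := norm_le_pi_norm τ j
      rw [Real.norm_eq_abs, hτj] at h5
      have h6 : a + c ≤ |a + c| := le_abs_self _
      nlinarith
    · show Real.log (firstMin d (Lat d A) τ) / tauPlus d τ ≤ -γ / (1 + γ)
      have hfm0 : 0 < firstMin d (Lat d A) τ := firstMin_pos hdet hτsum hd0 hc0 hc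
      have hfm_le : Real.log (firstMin d (Lat d A) τ) ≤ -c := by
        have := Real.log_le_log hfm0 (firstMin_le_mem hmem)
        rwa [Real.log_exp] at this
      rw [hTeq]
      calc Real.log (firstMin d (Lat d A) τ) / (a + c) ≤ -c / (a + c) :=
            (div_le_div_iff_of_pos_right hac).mpr hfm_le
        _ = -γ / (1 + γ) := by
            rw [hcdef, div_eq_div_iff hac.ne' h1γ.ne']
            ring


/-- Lower bound: if `E_γ` is finite for `γ > 0` then `-γ/(1+γ) ≤ ψ₁`. -/
lemma lowerC (hdet : |A.det| = 1) (hd : 2 ≤ d) {γ : ℝ} (hγ : 0 < γ)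
    (hfin' : ¬ (Eset A γ).Infinite) : -γ / (1 + γ) ≤ psi1 d (Lat d A) := by
  have hd0 : 0 < d := by omega
  rw [Set.not_infinite] at hfin'
  have h1γ : (0:ℝ) < 1 + γ := by linarith
  have hall : ∀ x ∈ Lat d A, x ≠ 0 → ∀ i, x i ≠ 0 := by
    intro x hx hx0 i h
    refine ((zero_coord_infinite hd0 hx hx0 h).mono ?_) hfin'
    rintro y ⟨h1, h2, h3⟩
    refine ⟨h1, ?_⟩
    rw [h3]
    exact Real.rpow_nonneg (norm_nonneg _) _
  obtain ⟨m, hm0, hm1, hm⟩ := exists_pos_lb (hfin'.subset (Set.diff_subset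
      (s := Eset A γ) (t := {0}))) (Pibar d) (by
    rintro x ⟨hxE, hx0⟩
    rw [Set.mem_singleton_iff] at hx0
    exact pibar_pos (hall x hxE.1 hx0))
  obtain ⟨c₀, hc0, hc1, hc⟩ := exists_c0 (A := A) hdet
  rw [psi1_eq]
  refine le_of_eps fun ε hε => ?_
  have hev : ∀ᶠ τ in FF d, -γ/(1+γ) - ε
      ≤ Real.log (firstMin d (Lat d A) τ.1) / tauPlus d τ.1 := by
    refine eventually_FF ⟨2*d*((|Real.log m| + 1)/ε), fun τ hτn => ?_⟩
    obtain ⟨τ', hτ⟩ := τ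
    simp only at hτn ⊢
    set T := tauPlus d τ' with hT
    have h2d : (0:ℝ) < 2*d := by positivity
    have hTlb : (|Real.log m| + 1)/ε ≤ T :=
      le_of_mul_le_mul_left ((norm_le_tauPlus hd0 hτ).trans' hτn) h2d
    have hT0 : 0 < T := lt_of_lt_of_le (by positivity) hTlb
    have hεT : |Real.log m| + 1 ≤ ε * T := by
      rw [div_le_iff₀ hε] at hTlb
      nlinarith
    have hγγ : 0 ≤ γ/(1+γ) := by positivity
    have key : ∀ l ∈ Sset A τ', Real.exp ((-γ/(1+γ) - ε) * T) ≤ l := by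
      rintro l ⟨hl0, x, hxL, hx0, hxb⟩
      have hPle : Pibar d x ≤ l := pibar_le_of_box hd0 hτ hl0 hxb
      by_cases hxE : x ∈ Eset A γ
      · have h5 : m ≤ l := (hm x ⟨hxE, by simp [hx0]⟩).trans hPle
        calc Real.exp ((-γ/(1+γ) - ε) * T) ≤ Real.exp (Real.log m) := by
              rw [Real.exp_le_exp]
              have hna := neg_abs_le (Real.log m)
              have hM : 0 ≤ γ/(1+γ) * T := mul_nonneg hγγ hT0.le
              have hexp : (-γ/(1+γ) - ε) * T = -(γ/(1+γ)*T) - ε*T := by ring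
              rw [hexp]
              linarith
          _ = m := Real.exp_log hm0
          _ ≤ l := h5
      · have hgt : ‖x‖ ^ (-γ) < Pibar d x := lt_of_not_ge fun hcon => hxE ⟨hxL, hcon⟩
        have hxpos : 0 < ‖x‖ := norm_pos_iff.mpr hx0
        have hxn : ‖x‖ ≤ l * Real.exp T := by
          refine (pi_norm_le_iff_of_nonneg (by positivity)).mpr fun i => ?_
          rw [Real.norm_eq_abs]
          exact (hxb i).trans (mul_le_mul_of_nonneg_left
            (Real.exp_le_exp.mpr (le_tauPlus hd0 hτ i)) hl0.le)
        have h7 : (l * Real.exp T) ^ (-γ) ≤ ‖x‖ ^ (-γ) :=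
          Real.rpow_le_rpow_of_nonpos hxpos hxn (by linarith)
        have h8 : (l * Real.exp T) ^ (-γ) = Real.exp ((Real.log l + T) * (-γ)) := by
          have h8a : l * Real.exp T = Real.exp (Real.log l + T) := by
            rw [Real.exp_add, Real.exp_log hl0]
          rw [h8a, Real.rpow_def_of_pos (Real.exp_pos _), Real.log_exp]
        have h9 : Real.exp ((Real.log l + T) * (-γ)) < l := by
          rw [← h8]
          exact lt_of_le_of_lt h7 (lt_of_lt_of_le hgt hPle)
        have h10 : (Real.log l + T) * (-γ) < Real.log l := by
          have := Real.log_lt_log (Real.exp_pos _) h9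
          rwa [Real.log_exp] at this
        calc Real.exp ((-γ/(1+γ) - ε) * T) ≤ Real.exp (Real.log l) := by
              rw [Real.exp_le_exp]
              have h11 : -γ * T ≤ (1+γ) * Real.log l := by nlinarith
              have h12 : (-γ/(1+γ)) * T ≤ Real.log l := by
                rw [div_mul_eq_mul_div, div_le_iff₀ h1γ]
                linarith
              have hexp : (-γ/(1+γ) - ε) * T = (-γ/(1+γ)) * T - ε*T := by ring
              have hM : 0 ≤ ε * T := mul_nonneg hε.le hT0.le
              rw [hexp]
              linarith
          _ = l := Real.exp_log hl0
    have hfmlb := le_firstMin hdet hτ hd0 key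
    have hfm0 : 0 < firstMin d (Lat d A) τ' := firstMin_pos hdet hτ hd0 hc0 hc
    have hlog : (-γ/(1+γ) - ε) * T ≤ Real.log (firstMin d (Lat d A) τ') := by
      have := Real.log_le_log (Real.exp_pos _) hfmlb
      rwa [Real.log_exp] at this
    rw [le_div_iff₀ hT0]
    exact hlog
  have h1 := Filter.le_liminf_of_le (isCoboundedUnder_ge hdet hd) hev
  linarith

end Chunk4

end S18

end S18aux

/-- `ψ̲₁(Λ) = −ω(Λ)/(1 + ω(Λ))` for a unimodular lattice `Λ ⊆ ℝ^d`: if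
`ω(Λ) = +∞` then `ψ̲₁(Λ) = −1`, and if `ω(Λ)` is a real number `w` then
`ψ̲₁(Λ) = −w/(1+w)` (which is `0` for `w = 0`). -/
theorem stmt_18 (d : ℕ) (hd : 2 ≤ d) (Λ : Set (Fin d → ℝ))
    (hΛ : IsUnimodularLattice d Λ) :
    (dioExp d Λ = ⊤ → psi1 d Λ = -1) ∧
    (∀ w : ℝ, dioExp d Λ = (w : EReal) → psi1 d Λ = -w / (1 + w)) := by

  obtain ⟨A, hdet, rfl⟩ := hΛ
  have hLat : {x | ∃ z : Fin d → ℤ, x = A.mulVec fun i => (z i : ℝ)} = S18.Lat d A := rfl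
  rw [hLat]
  constructor
  · intro htop
    refine le_antisymm ?_ (S18.psi1_ge_neg_one hdet hd)
    refine S18.le_of_eps fun ε hε => ?_
    have hlt : ((1/ε : ℝ) : EReal) < dioExp d (S18.Lat d A) := by
      rw [htop]
      exact EReal.coe_lt_top _
    obtain ⟨g, hg, hgl⟩ := lt_sSup_iff.mp hlt
    obtain ⟨γ, rfl, hγinf⟩ := hg
    have hγ : 1/ε < γ := by exact_mod_cast hgl
    have hγ0 : 0 ≤ γ := le_of_lt (lt_trans (by positivity) hγ)
    have hub := S18.upperB hdet hd hγ0 hγinf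
    have h1γ : (0:ℝ) < 1 + γ := by linarith
    have hεγ : 1 < ε * γ := by
      have h2 := mul_lt_mul_of_pos_left hγ hε
      rwa [mul_one_div, div_self hε.ne'] at h2
    have h3 : -γ/(1+γ) ≤ -1 + ε := by
      rw [div_le_iff₀ h1γ]
      nlinarith
    linarith
  · intro w hw
    have hvalid_lt : ∀ γ : ℝ, γ < w → (S18.Eset A γ).Infinite := by
      intro γ hγ
      have h1 : (γ : EReal) < dioExp d (S18.Lat d A) := by
        rw [hw]
        exact_mod_cast hγ
      obtain ⟨g, hg, hgl⟩ := lt_sSup_iff.mp h1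
      obtain ⟨γ₁, rfl, hγ₁⟩ := hg
      exact S18.Eset_mono hdet (le_of_lt (by exact_mod_cast hgl)) hγ₁
    have hnot_gt : ∀ γ : ℝ, w < γ → ¬ (S18.Eset A γ).Infinite := by
      intro γ hγ hinf
      have h2 : (γ : EReal) ≤ dioExp d (S18.Lat d A) := le_sSup ⟨γ, rfl, hinf⟩
      rw [hw] at h2
      have h3 : γ ≤ w := by exact_mod_cast h2
      exact absurd h3 (not_le.mpr hγ)
    have hw0 : 0 ≤ w := by
      by_contra hneg
      push_neg at hneg
      exact hnot_gt (w/2) (by linarith) (S18.Eset_infinite_neg hdet hd (by linarith))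
    refine le_antisymm ?_ ?_
    · rcases eq_or_lt_of_le hw0 with hw0' | hw0'
      · rw [← hw0']
        have h4 : -(0:ℝ)/(1+0) = 0 := by norm_num
        rw [h4]
        exact S18.psi1_le_zero hdet hd
      · refine S18.le_of_eps fun ε hε => ?_
        set δ := min (w/2) ε with hδ
        have hδ0 : 0 < δ := lt_min (by linarith) hε
        have hδw : δ < w := lt_of_le_of_lt (min_le_left _ _) (by linarith)
        have hγ0 : (0:ℝ) ≤ w - δ := by linarith
        have h := S18.upperB hdet hd hγ0 (hvalid_lt _ (by linarith))
        have hd1 : (0:ℝ) < 1 + (w - δ) := by linarith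
        have hd2 : (0:ℝ) < 1 + w := by linarith
        have hkey : -(w-δ)/(1+(w-δ)) - (-w/(1+w)) = δ/((1+(w-δ))*(1+w)) := by
          field_simp
          ring
        have hden : (1:ℝ) ≤ (1+(w-δ))*(1+w) := by nlinarith
        have h5 : δ/((1+(w-δ))*(1+w)) ≤ δ := by
          refine div_le_self hδ0.le hden
        have hδε : δ ≤ ε := min_le_right _ _
        linarith
    · refine S18.le_of_eps fun ε hε => ?_
      have hγpos : (0:ℝ) < w + ε := by linarith
      have h := S18.lowerC hdet hd hγpos (hnot_gt _ (by linarith))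
      have hd2 : (0:ℝ) < 1 + w := by linarith
      have hd3 : (0:ℝ) < 1 + (w + ε) := by linarith
      have hkey : -w/(1+w) - (-(w+ε)/(1+(w+ε))) = ε/((1+w)*(1+(w+ε))) := by
        field_simp
        ring
      have hden : (1:ℝ) ≤ (1+w)*(1+(w+ε)) := by nlinarith
      have h5 : ε/((1+w)*(1+(w+ε))) ≤ ε := div_le_self hε.le hden
      linarith

end
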